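/- Let (T, X) be a tree decomposition of a graph G of adhesion at most d, and let i be a node of T. Then for every connected component C of the graph G - X(i), the neighborhood of C in G intersects X(i) in at most d vertices. -/

import Mathlib

open SimpleGraph

variable {V : Type*}

/-- Reachability within the subgraph of `G` induced by the vertex set `W`. -/
def ReachIn (G : SimpleGraph V) (W : Set V) (x y : V) : Prop :=
  ∃ (hx : x ∈ W) (hy : y ∈ W), (G.induce W).Reachable ⟨x, hx⟩ ⟨y, hy⟩

/-- Removing `S` disconnects some connected component of `G`: there are two vertices
outside `S` that are connected in `G` but not in `G - S`. -/
def Separates (G : SimpleGraph V) (S : Set V) : Prop :=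
  ∃ u v : V, u ∉ S ∧ v ∉ S ∧ G.Reachable u v ∧ ¬ ReachIn G Sᶜ u v

/-- `S` is a minimal separator of `G`. -/
def IsMinimalSeparator (G : SimpleGraph V) (S : Set V) : Prop :=
  Separates G S ∧ ∀ S' ⊂ S, ¬ Separates G S'

/-- `C` is a connected component of the subgraph of `G` induced by `W`. -/
def IsCompOf (G : SimpleGraph V) (C W : Set V) : Prop :=
  C ⊆ W ∧ (G.induce C).Connected ∧ ∀ u ∈ C, ∀ v ∈ W, G.Adj u v → v ∈ C

/-- A separation `(A, B)` of a graph `G`. -/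
def IsSeparation (G : SimpleGraph V) (A B : Set V) : Prop :=
  A ∪ B = Set.univ ∧ ∀ u ∈ A \ B, ∀ v ∈ B \ A, ¬ G.Adj u v

/-- `(T, X)` is a tree decomposition of `G`. -/
structure IsTreeDecomp {ι : Type*} (G : SimpleGraph V) (T : SimpleGraph ι)
    (X : ι → Set V) : Prop where
  isTree : T.IsTree
  covers_verts : ∀ v : V, ∃ i, v ∈ X i
  covers_edges : ∀ ⦃u v : V⦄, G.Adj u v → ∃ i, u ∈ X i ∧ v ∈ X i
  subtree : ∀ v : V, (T.induce {i | v ∈ X i}).Connected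

/-- The tree decomposition given by the bag function `X` has adhesion at most `d`. -/
def AdhesionLE {ι : Type*} (T : SimpleGraph ι) (X : ι → Set V) (d : ℕ) : Prop :=
  ∀ ⦃i j : ι⦄, T.Adj i j → (X i ∩ X j).ncard ≤ d

/-- The torso of the vertex set `W` in `G`: the induced subgraph `G[W]` with an edge added
between each pair of vertices of `W` connected by a path internally avoiding `W`. -/
def torso (G : SimpleGraph V) (W : Set V) : SimpleGraph W :=
  SimpleGraph.fromRel (fun u v =>
    G.Adj u v ∨ ∃ p : G.Walk (u : V) (v : V), p.IsPath ∧
      ∀ z ∈ p.support, z ≠ (u : V) → z ≠ (v : V) → z ∉ W)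

/-- One smoothing step: `K` is obtained from `H` by replacing the degree-2 vertex `v`,
whose two neighbors are `a` and `b`, by a direct edge between `a` and `b`. -/
def SmoothStep (H K : SimpleGraph.Subgraph (⊤ : SimpleGraph V)) : Prop :=
  ∃ v a b : V, a ≠ b ∧ a ≠ v ∧ b ≠ v ∧ v ∈ H.verts ∧ H.neighborSet v = {a, b} ∧
    K.verts = H.verts \ {v} ∧
    ∀ x y : V, K.Adj x y ↔ ((H.Adj x y ∧ x ≠ v ∧ y ≠ v) ∨ (x = a ∧ y = b) ∨ (x = b ∧ y = a))

/-- `K` (a graph on a subset of the vertices of `G`) is a topological minor of `G`: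
it is obtained from a subgraph of `G` by repeatedly smoothing degree-2 vertices. -/
def IsTopMinor (K : SimpleGraph.Subgraph (⊤ : SimpleGraph V)) (G : SimpleGraph V) : Prop :=
  ∃ H₀ : SimpleGraph.Subgraph (⊤ : SimpleGraph V),
    (∀ ⦃x y : V⦄, H₀.Adj x y → G.Adj x y) ∧ Relation.ReflTransGen SmoothStep H₀ K

/-- An abstract graph `H` is a topological minor of `G` if it is isomorphic to some
topological minor of `G`. -/
def IsTopMinorGraph {W : Type*} (H : SimpleGraph W) (G : SimpleGraph V) : Prop :=
  ∃ K : SimpleGraph.Subgraph (⊤ : SimpleGraph V), IsTopMinor K G ∧ Nonempty (H ≃g K.coe)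

/-- One edge-contraction step: `K` is obtained from `H` by contracting the edge `{a, b}`
(the vertex `b` is merged into `a`). -/
def ContractStep (H K : SimpleGraph.Subgraph (⊤ : SimpleGraph V)) : Prop :=
  ∃ a b : V, H.Adj a b ∧ K.verts = H.verts \ {b} ∧
    ∀ x y : V, K.Adj x y ↔ (x ≠ b ∧ y ≠ b ∧ x ≠ y ∧
      (H.Adj x y ∨ (x = a ∧ H.Adj b y) ∨ (y = a ∧ H.Adj x b)))

/-- `G` contains `Hpat` as a minor: some graph obtained from a subgraph of `G` by
contracting edges is isomorphic to `Hpat`. -/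
def HasMinor {W : Type*} (G : SimpleGraph V) (Hpat : SimpleGraph W) : Prop :=
  ∃ H₀ K : SimpleGraph.Subgraph (⊤ : SimpleGraph V),
    (∀ ⦃x y : V⦄, H₀.Adj x y → G.Adj x y) ∧ Relation.ReflTransGen ContractStep H₀ K ∧
      Nonempty (Hpat ≃g K.coe)

/-- Planarity, via Wagner's theorem: no `K₅`-minor and no `K₃,₃`-minor. -/
def IsPlanar (G : SimpleGraph V) : Prop :=
  ¬ HasMinor G (completeGraph (Fin 5)) ∧ ¬ HasMinor G (completeBipartiteGraph (Fin 3) (Fin 3))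

/-- A graph is triconnected if removing fewer than three vertices cannot disconnect it. -/
def Triconnected (G : SimpleGraph V) : Prop :=
  ∀ S : Set V, S.ncard < 3 → (G.induce Sᶜ).Preconnected

/-- A graph is claw-free if it has no induced `K_{1,3}`. -/
def ClawFree (G : SimpleGraph V) : Prop :=
  ∀ v a b c : V, G.Adj v a → G.Adj v b → G.Adj v c → a ≠ b → a ≠ c → b ≠ c →
    ¬ G.Adj a b → ¬ G.Adj a c → G.Adj b c


namespace TDP
variable {ι : Type*} {T : SimpleGraph ι}


variable {ι : Type*} {T : SimpleGraph ι}

lemma walk_of_induce_reachable {s : Set ι} {x y : s}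
    (h : (T.induce s).Reachable x y) :
    ∃ w : T.Walk x.1 y.1, ∀ z ∈ w.support, z ∈ s := by
  obtain ⟨w⟩ := h
  induction w with
  | nil => exact ⟨.nil, by simp⟩
  | @cons a b c h p ih =>
    obtain ⟨w, hw⟩ := ih
    refine ⟨.cons (show T.Adj a.1 b.1 from h) w, ?_⟩
    intro z hz
    rw [SimpleGraph.Walk.support_cons, List.mem_cons] at hz
    rcases hz with rfl | hz
    · exact a.2
    · exact hw z hz

/-- Reachability in `T` avoiding the vertex `i`. -/
def R (T : SimpleGraph ι) (i k k' : ι) : Prop :=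
  ∃ w : T.Walk k k', ∀ z ∈ w.support, z ≠ i

lemma R.symm {i k k'} (h : R T i k k') : R T i k' k := by
  obtain ⟨w, hw⟩ := h
  exact ⟨w.reverse, fun z hz => hw z (by simpa [Walk.support_reverse] using hz)⟩

lemma R.trans {i k k' k''} (h : R T i k k') (h' : R T i k' k'') : R T i k k'' := by
  obtain ⟨w, hw⟩ := h; obtain ⟨w', hw'⟩ := h'
  refine ⟨w.append w', fun z hz => ?_⟩
  rcases (Walk.mem_support_append_iff _ _).mp hz with h1 | h2
  · exact hw z h1
  · exact hw' z h2

lemma not_R_of_adj (hT : T.IsTree) {i j j' : ι} (hj : T.Adj i j) (hj' : T.Adj i j')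
    (hne : j ≠ j') : ¬ R T i j j' := by
  classical
  rintro ⟨w, hw⟩
  have hps : ∀ z ∈ (w.toPath : T.Walk j j').support, z ≠ i :=
    fun z hz => hw z (Walk.support_toPath_subset w hz)
  have hq : (Walk.cons hj.symm (Walk.cons hj' Walk.nil)).IsPath := by
    simp [Walk.cons_isPath_iff, hne, hj.ne', hj'.ne]
  have heq := (hT.existsUnique_path j j').unique (w.toPath).2 hq
  have : i ∈ (w.toPath : T.Walk j j').support := by rw [heq]; simp
  exact hps i this rfl

lemma exists_nbr (hT : T.IsTree) {i k : ι} (hki : k ≠ i) :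
    ∃ j, T.Adj i j ∧ R T i j k := by
  classical
  obtain ⟨w⟩ := hT.isConnected.preconnected i k
  obtain ⟨p, hp⟩ := w.toPath
  cases p with
  | nil => exact absurd rfl hki.symm
  | @cons _ j _ h r =>
    rw [Walk.cons_isPath_iff] at hp
    exact ⟨j, h, ⟨r, fun z hz hzi => hp.2 (hzi ▸ hz)⟩⟩

lemma exists_nbr_on_walk {i k : ι} (hki : k ≠ i) (w : T.Walk k i) :
    ∃ j, j ∈ w.support ∧ T.Adj i j ∧ R T i j k := by
  classical
  have hi : i ∈ w.support := w.end_mem_support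
  have hc : (w.takeUntil i hi).support.count i = 1 := w.count_support_takeUntil_eq_one hi
  have hrc : (w.takeUntil i hi).reverse.support.count i = 1 := by
    rw [Walk.support_reverse, List.count_reverse]; exact hc
  have hsub : ∀ z ∈ (w.takeUntil i hi).reverse.support, z ∈ w.support := by
    intro z hz
    rw [Walk.support_reverse, List.mem_reverse] at hz
    exact w.support_takeUntil_subset hi hz
  generalize (w.takeUntil i hi).reverse = q at hrc hsub
  cases q with
  | nil => exact absurd rfl hki.symm
  | @cons _ j _ h r =>
    rw [Walk.support_cons, List.count_cons_self] at hrc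
    have hir : i ∉ r.support := by
      rw [← List.count_eq_zero]; omega
    refine ⟨j, hsub j (by simp), h, ⟨r, fun z hz hzi => hir (hzi ▸ hz)⟩⟩


lemma bags_R {G : SimpleGraph V} {X : ι → Set V} (hTD : IsTreeDecomp G T X)
    {i : ι} {u : V} (hu : u ∉ X i) {k k' : ι} (hk : u ∈ X k) (hk' : u ∈ X k') :
    R T i k k' := by
  obtain ⟨w, hw⟩ := walk_of_induce_reachable
    ((hTD.subtree u).preconnected ⟨k, hk⟩ ⟨k', hk'⟩)
  exact ⟨w, fun z hz hzi => hu (hzi ▸ hw z hz)⟩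

lemma comp_R {G : SimpleGraph V} {X : ι → Set V} (hTD : IsTreeDecomp G T X)
    {i : ι} {C : Set V} (hCs : C ⊆ (X i)ᶜ) (hconn : (G.induce C).Connected) :
    ∀ (u u' : C) (k k' : ι), (u : V) ∈ X k → (u' : V) ∈ X k' → R T i k k' := by
  intro u u'
  obtain ⟨w⟩ := hconn.preconnected u u'
  induction w with
  | nil => exact fun k k' hk hk' => bags_R hTD (hCs (Subtype.coe_prop _)) hk hk'
  | @cons a b c h p ih =>
    intro k k' hk hk'
    obtain ⟨m, hma, hmb⟩ := hTD.covers_edges (h : G.Adj (a : V) (b : V))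
    exact (bags_R hTD (hCs a.2) hk hma).trans (ih m k' hmb hk')

end TDP

/-- If `(T, X)` has adhesion at most `d` and `C` is a connected component of `G - X(i)`,
then the neighborhood of `C` meets `X(i)` in at most `d` vertices. -/
theorem neighbors_of_component_le_adhesion [Fintype V] {ι : Type*} [Fintype ι]
    (G : SimpleGraph V) (T : SimpleGraph ι) (X : ι → Set V)
    (hTD : IsTreeDecomp G T X) (d : ℕ) (hadh : AdhesionLE T X d)
    (i : ι) (C : Set V) (hC : IsCompOf G C (X i)ᶜ) :
    ({v ∈ X i | ∃ u ∈ C, G.Adj u v}).ncard ≤ d := by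
  classical
  obtain ⟨hCsub, hCconn, _⟩ := hC
  obtain ⟨⟨u0, hu0⟩⟩ := hCconn.nonempty
  obtain ⟨k0, hk0⟩ := hTD.covers_verts u0
  have hk0i : k0 ≠ i := fun h => hCsub hu0 (h ▸ hk0)
  obtain ⟨j, hji, hjk0⟩ := TDP.exists_nbr hTD.isTree hk0i
  have key : {v ∈ X i | ∃ u ∈ C, G.Adj u v} ⊆ X i ∩ X j := by
    rintro v ⟨hvXi, u, huC, huv⟩
    refine ⟨hvXi, ?_⟩
    obtain ⟨m, hum, hvm⟩ := hTD.covers_edges huv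
    have hmi : m ≠ i := fun h => hCsub huC (h ▸ hum)
    have hRk0m : TDP.R T i k0 m :=
      TDP.comp_R hTD hCsub hCconn ⟨u0, hu0⟩ ⟨u, huC⟩ k0 m hk0 hum
    obtain ⟨w, hw⟩ := TDP.walk_of_induce_reachable
      ((hTD.subtree v).preconnected ⟨m, hvm⟩ ⟨i, hvXi⟩)
    obtain ⟨j', hj's, hj'i, hj'm⟩ := TDP.exists_nbr_on_walk hmi w
    have hjj' : j = j' := by
      by_contra hne
      exact TDP.not_R_of_adj hTD.isTree hji hj'i hne
        (hjk0.trans (hRk0m.trans hj'm.symm))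
    exact hjj' ▸ hw j' hj's
  calc ({v ∈ X i | ∃ u ∈ C, G.Adj u v}).ncard ≤ (X i ∩ X j).ncard :=
        Set.ncard_le_ncard key (Set.toFinite _)
    _ ≤ d := hadh hji
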